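/- Let R be a finite nontrivial commutative ring. Then R is a D-ring if and only if R is a local ring. -/

import Mathlib

/-- A finite nontrivial commutative ring is a D-ring
(every zero divisor is nilpotent) if and only if it is local. -/
theorem stmt_2 {R : Type*} [CommRing R] [Finite R] [Nontrivial R] :
    (∀ z : R, (∃ t : R, t ≠ 0 ∧ z * t = 0) → IsNilpotent z) ↔ IsLocalRing R := by
  constructor
  · intro h
    apply IsLocalRing.of_nonunits_add
    have key : ∀ a : R, a ∈ nonunits R → IsNilpotent a := by
      intro a ha
      apply h
      by_contra hc
      push_neg at hc
      -- a is not a zero divisor, so multiplication by a is injective, hence surjective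
      have hinj : Function.Injective (a * ·) := by
        intro x y hxy
        simp only at hxy
        by_contra hne
        exact hc (x - y) (sub_ne_zero.mpr hne) (by rw [mul_sub, hxy, sub_self])
      have hsurj := Finite.surjective_of_injective hinj
      obtain ⟨t, ht⟩ := hsurj 1
      exact ha (IsUnit.of_mul_eq_one (a := a) t ht)
    intro a b ha hb
    have := Commute.isNilpotent_add (Commute.all a b) (key a ha) (key b hb)
    intro hu
    obtain ⟨n, hn⟩ := this
    have := hu.pow n
    rw [hn] at this
    exact not_isUnit_zero this
  · intro hL z ⟨t, ht0, hzt⟩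
    have hz : ¬ IsUnit z := by
      intro hu
      obtain ⟨u, rfl⟩ := hu
      apply ht0
      calc t = ↑u⁻¹ * (↑u * t) := by rw [← mul_assoc]; simp
        _ = 0 := by rw [hzt, mul_zero]
    have hmem : z ∈ IsLocalRing.maximalIdeal R := hz
    have : IsNilpotent (IsLocalRing.maximalIdeal R) := by
      rw [← IsLocalRing.jacobson_eq_maximalIdeal (⊥ : Ideal R) bot_ne_top]
      exact IsArtinianRing.isNilpotent_jacobson_bot
    obtain ⟨n, hn⟩ := this
    exact ⟨n, by
      have : z ^ n ∈ (IsLocalRing.maximalIdeal R) ^ n := Ideal.pow_mem_pow hmem n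
      rw [hn] at this
      simpa using this⟩
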